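/- Let H and 𝒦 be separable complex Hilbert spaces, U : ℝ → U(H) a strongly continuous unitary representation, Λ the translation representation (Λ(t)Φ)(s) = Φ(s−t) on L²(ℝ;𝒦), and W : H → L²(ℝ;𝒦) an isometry with W U(t) = Λ(t) W for all t. For f ∈ L^∞(ℝ) set E(f) := W* M_f W. Then for every f₁ ∈ L¹(ℝ) ∩ L^∞(ℝ) and every f₂ ∈ L¹(ℝ), the weak operator integral ∫_ℝ f₂(t) U(t) E(f₁) U(t)* dt equals E(f₁ ∗ f₂); that is, for all ψ, ψ' ∈ H, ∫_ℝ f₂(t) ⟨ψ, U(t) E(f₁) U(t)* ψ'⟩ dt = ⟨ψ, E(f₁ ∗ f₂) ψ'⟩, where (f₁ ∗ f₂)(s) = ∫_ℝ f₁(s−t) f₂(t) dt is the convolution. -/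

import Mathlib

open MeasureTheory
open scoped ENNReal NNReal

local notation "⟪" x ", " y "⟫_ℂ" => @inner ℂ _ _ x y

/-- Let `W : H → L²(ℝ;𝒦)` be an isometry intertwining a strongly continuous
unitary one-parameter group `U` with the translation representation (a.e. formulation), and
for bounded measurable `g` let `E(g) = W* M_g W` be characterised by its matrix elements.
Then for `f₁ ∈ L¹ ∩ L^∞` and `f₂ ∈ L¹` the weak operator integral
`∫ f₂(t) U(t) E(f₁) U(t)* dt` equals `E(f₁ ∗ f₂)`:
`∫ t, f₂ t ⟨ψ, U(t) E(f₁) U(t)* ψ'⟩ = ⟨ψ, E(f₁ ∗ f₂) ψ'⟩` for all `ψ, ψ'`. -/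
theorem stmt19 {H K : Type*}
    [NormedAddCommGroup H] [InnerProductSpace ℂ H] [CompleteSpace H] [SecondCountableTopology H]
    [NormedAddCommGroup K] [InnerProductSpace ℂ K] [CompleteSpace K] [SecondCountableTopology K]
    (U : ℝ → (H →L[ℂ] H))
    (hU0 : U 0 = 1) (hUadd : ∀ s t : ℝ, U (s + t) = U s * U t)
    (hUuni : ∀ t : ℝ, U t ∈ unitary (H →L[ℂ] H))
    (hUcont : ∀ ψ : H, Continuous fun t : ℝ => U t ψ)
    (W : H →ₗᵢ[ℂ] Lp K 2 (volume : Measure ℝ))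
    (hW : ∀ (t : ℝ) (ψ : H),
        (W (U t ψ) : ℝ → K) =ᵐ[volume] fun s => (W ψ : Lp K 2 (volume : Measure ℝ)) (s - t))
    (f₁ f₂ : ℝ → ℂ)
    (hf₁_meas : Measurable f₁) (hf₁_int : Integrable f₁) (hf₁_bdd : ∃ C : ℝ, ∀ s, ‖f₁ s‖ ≤ C)
    (hf₂_int : Integrable f₂)
    (E₁ E₁₂ : H →L[ℂ] H)
    (hE₁ : ∀ ψ ψ' : H, ⟪ψ, E₁ ψ'⟫_ℂ
        = ∫ s : ℝ, f₁ s * ⟪(W ψ : Lp K 2 (volume : Measure ℝ)) s,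
            (W ψ' : Lp K 2 (volume : Measure ℝ)) s⟫_ℂ)
    (hE₁₂ : ∀ ψ ψ' : H, ⟪ψ, E₁₂ ψ'⟫_ℂ
        = ∫ s : ℝ, (∫ t : ℝ, f₁ (s - t) * f₂ t) * ⟪(W ψ : Lp K 2 (volume : Measure ℝ)) s,
            (W ψ' : Lp K 2 (volume : Measure ℝ)) s⟫_ℂ) :
    ∀ ψ ψ' : H,
      ∫ t : ℝ, f₂ t * ⟪ψ, (U t * E₁ * star (U t)) ψ'⟫_ℂ = ⟪ψ, E₁₂ ψ'⟫_ℂ := by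
  intro ψ ψ'
  obtain ⟨C, hC⟩ := hf₁_bdd
  have hC0 : 0 ≤ C := le_trans (norm_nonneg _) (hC 0)
  set g : ℝ → ℂ := fun s => ⟪(W ψ : Lp K 2 (volume : Measure ℝ)) s,
      (W ψ' : Lp K 2 (volume : Measure ℝ)) s⟫_ℂ with hg
  have hg_int : Integrable g := L2.integrable_inner (𝕜 := ℂ) (W ψ) (W ψ')
  -- star (U t) = U (-t)
  have hstar : ∀ t : ℝ, star (U t) = U (-t) := by
    intro t
    have h1 : U t * U (-t) = 1 := by rw [← hUadd]; simp [hU0]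
    have h2 : star (U t) * U t = 1 := (Unitary.mem_iff.mp (hUuni t)).1
    calc star (U t) = star (U t) * (U t * U (-t)) := by rw [h1, mul_one]
      _ = U (-t) := by rw [← mul_assoc, h2, one_mul]
  -- pointwise matrix element identity
  have hme : ∀ t : ℝ, ⟪ψ, (U t * E₁ * star (U t)) ψ'⟫_ℂ = ∫ s : ℝ, f₁ (s - t) * g s := by
    intro t
    have h1 : (U t * E₁ * star (U t)) ψ' = U t (E₁ (U (-t) ψ')) := by
      rw [hstar]; rfl
    have h2 : ⟪ψ, (U t * E₁ * star (U t)) ψ'⟫_ℂ = ⟪U (-t) ψ, E₁ (U (-t) ψ')⟫_ℂ := by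
      rw [h1, ← ContinuousLinearMap.adjoint_inner_left (U t),
        ← ContinuousLinearMap.star_eq_adjoint, hstar]
    rw [h2, hE₁]
    have hWψ := hW (-t) ψ
    have hWψ' := hW (-t) ψ'
    have h3 : (∫ s : ℝ, f₁ s * ⟪(W (U (-t) ψ) : Lp K 2 (volume : Measure ℝ)) s,
          (W (U (-t) ψ') : Lp K 2 (volume : Measure ℝ)) s⟫_ℂ)
        = ∫ s : ℝ, f₁ s * g (s + t) := by
      refine integral_congr_ae ?_
      filter_upwards [hWψ, hWψ'] with s h1' h2'
      rw [h1', h2']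
      simp [hg, sub_neg_eq_add]
    rw [h3]
    have h4 : (∫ s : ℝ, f₁ s * g (s + t)) = ∫ s : ℝ, f₁ (s + t - t) * g (s + t) := by
      simp
    rw [h4]
    exact integral_add_right_eq_self (fun s => f₁ (s - t) * g s) t
  simp_rw [hme]
  -- Fubini
  have hprod : Integrable (fun p : ℝ × ℝ => f₂ p.1 * (f₁ (p.2 - p.1) * g p.2))
      (volume.prod volume) := by
    have hmeas : AEStronglyMeasurable (fun p : ℝ × ℝ => f₂ p.1 * (f₁ (p.2 - p.1) * g p.2))
        (volume.prod volume) := by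
      refine (hf₂_int.aestronglyMeasurable.comp_fst.mul
        (((hf₁_meas.comp (measurable_snd.sub measurable_fst)).aestronglyMeasurable).mul
          hg_int.aestronglyMeasurable.comp_snd))
    refine Integrable.mono' ((hf₂_int.norm.mul_prod (hg_int.norm.const_mul C))) hmeas ?_
    refine Filter.Eventually.of_forall fun p => ?_
    calc ‖f₂ p.1 * (f₁ (p.2 - p.1) * g p.2)‖
        = ‖f₂ p.1‖ * (‖f₁ (p.2 - p.1)‖ * ‖g p.2‖) := by simp [norm_mul]
      _ ≤ ‖f₂ p.1‖ * (C * ‖g p.2‖) := by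
          gcongr
          exact hC _
  have hswap := MeasureTheory.integral_integral_swap (f := fun t s => f₂ t * (f₁ (s - t) * g s))
    hprod
  calc (∫ t : ℝ, f₂ t * ∫ s : ℝ, f₁ (s - t) * g s)
      = ∫ t : ℝ, ∫ s : ℝ, f₂ t * (f₁ (s - t) * g s) := by
        simp_rw [integral_const_mul]
    _ = ∫ s : ℝ, ∫ t : ℝ, f₂ t * (f₁ (s - t) * g s) := hswap
    _ = ∫ s : ℝ, (∫ t : ℝ, f₁ (s - t) * f₂ t) * g s := by
        refine integral_congr_ae (Filter.Eventually.of_forall fun s => ?_)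
        show (∫ t : ℝ, f₂ t * (f₁ (s - t) * g s)) = (∫ t : ℝ, f₁ (s - t) * f₂ t) * g s
        rw [← integral_mul_const]
        refine integral_congr_ae (Filter.Eventually.of_forall fun t => ?_)
        ring
    _ = ⟪ψ, E₁₂ ψ'⟫_ℂ := (hE₁₂ ψ ψ').symm
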